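/- The function ψ(x) = (x(x² - α²)e^{-x²/(4α²)} - √(2π)·α³·e^{x²/(4α²)}·erf(x/(√2 α)))/(x² - α²) is not square integrable on ℝ: its L² norm diverges due to its growth at infinity. -/

import Mathlib

open MeasureTheory

noncomputable section

/-- The error function erf(z) = (2/√π)∫₀ᶻ e^{-t²} dt. -/
def erf (z : ℝ) : ℝ := 2 / Real.sqrt Real.pi * ∫ t in (0:ℝ)..z, Real.exp (-t ^ 2)

open Filter

lemma erf_one_pos : 0 < erf 1 := by
  have hI : IntervalIntegrable (fun t : ℝ => Real.exp (-t ^ 2)) volume 0 1 :=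
    (Real.continuous_exp.comp (continuous_neg.comp (continuous_pow 2))).intervalIntegrable 0 1
  have h1 : 0 < ∫ t in (0:ℝ)..1, Real.exp (-t ^ 2) :=
    intervalIntegral.intervalIntegral_pos_of_pos_on hI
      (fun x _ => Real.exp_pos _) one_pos
  have h2 : 0 < 2 / Real.sqrt Real.pi :=
    div_pos two_pos (Real.sqrt_pos.mpr Real.pi_pos)
  exact mul_pos h2 h1

lemma erf_one_le {z : ℝ} (hz : 1 ≤ z) : erf 1 ≤ erf z := by
  have hcont : Continuous (fun t : ℝ => Real.exp (-t ^ 2)) :=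
    Real.continuous_exp.comp (continuous_neg.comp (continuous_pow 2))
  have hI1 : IntervalIntegrable (fun t : ℝ => Real.exp (-t ^ 2)) volume 0 1 :=
    hcont.intervalIntegrable 0 1
  have hI2 : IntervalIntegrable (fun t : ℝ => Real.exp (-t ^ 2)) volume 1 z :=
    hcont.intervalIntegrable 1 z
  have hadd := intervalIntegral.integral_add_adjacent_intervals hI1 hI2
  have hnn : 0 ≤ ∫ t in (1:ℝ)..z, Real.exp (-t ^ 2) :=
    intervalIntegral.integral_nonneg hz (fun t _ => (Real.exp_pos _).le)
  have h2 : 0 ≤ 2 / Real.sqrt Real.pi :=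
    (div_pos two_pos (Real.sqrt_pos.mpr Real.pi_pos)).le
  unfold erf
  have : (∫ t in (0:ℝ)..1, Real.exp (-t ^ 2)) ≤ ∫ t in (0:ℝ)..z, Real.exp (-t ^ 2) := by
    rw [← hadd]; linarith
  exact mul_le_mul_of_nonneg_left this h2

theorem candidate_ground_state_not_square_integrable
    (α : ℝ) (hα : 0 < α) (ψ : ℝ → ℝ)
    (hψ : ∀ x, x ≠ α → x ≠ -α →
      ψ x = (x * (x ^ 2 - α ^ 2) * Real.exp (-x ^ 2 / (4 * α ^ 2))
        - Real.sqrt (2 * Real.pi) * α ^ 3 * Real.exp (x ^ 2 / (4 * α ^ 2))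
          * erf (x / (Real.sqrt 2 * α))) / (x ^ 2 - α ^ 2)) :
    ¬ Integrable (fun x => ψ x ^ 2) (volume : Measure ℝ) := by
  set C : ℝ := Real.sqrt (2 * Real.pi) * α ^ 3 * erf 1 with hC
  have hsqrt2pi : 0 < Real.sqrt (2 * Real.pi) :=
    Real.sqrt_pos.mpr (by positivity)
  have hCpos : 0 < C := by
    have := erf_one_pos
    positivity
  -- y := x^2/(4α^2) tends to ∞
  have hy : Tendsto (fun x : ℝ => x ^ 2 / (4 * α ^ 2)) atTop atTop :=
    (tendsto_pow_atTop two_ne_zero).atTop_div_const (by positivity)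
  -- eventually exp(y) ≥ y^2
  have hexp : ∀ᶠ y : ℝ in atTop, y ^ 2 ≤ Real.exp y := by
    have h := (Real.tendsto_exp_div_pow_atTop 2).eventually_ge_atTop 1
    filter_upwards [h, eventually_gt_atTop (0:ℝ)] with y h1 h2
    have : y ^ 2 > 0 := by positivity
    calc y ^ 2 = 1 * y ^ 2 := (one_mul _).symm
    _ ≤ (Real.exp y / y ^ 2) * y ^ 2 := by
        exact mul_le_mul_of_nonneg_right h1 this.le
    _ = Real.exp y := by field_simp
  have hA : ∀ᶠ x : ℝ in atTop,
      (x ^ 2 / (4 * α ^ 2)) ^ 2 ≤ Real.exp (x ^ 2 / (4 * α ^ 2)) := hy.eventually hexp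
  -- eventually C * (x^2/(4α^2))^2 ≥ x^3 + x^2
  set c : ℝ := C / (16 * α ^ 4) with hc
  have hcpos : 0 < c := by positivity
  have hB : ∀ᶠ x : ℝ in atTop, x ^ 3 + x ^ 2 ≤ C * (x ^ 2 / (4 * α ^ 2)) ^ 2 := by
    filter_upwards [eventually_ge_atTop (1:ℝ), eventually_ge_atTop (2 / c)] with x hx1 hx2
    have hx0 : 0 < x := lt_of_lt_of_le one_pos hx1
    have h2c : 2 ≤ c * x := by
      rw [div_le_iff₀ hcpos] at hx2; linarith [hx2]
    have hrw : C * (x ^ 2 / (4 * α ^ 2)) ^ 2 = c * x ^ 4 := by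
      rw [hc]; field_simp; ring
    rw [hrw]
    nlinarith [pow_pos hx0 3, pow_pos hx0 2, mul_le_mul_of_nonneg_right h2c (pow_pos hx0 3).le]
  -- eventually ψ x ≤ -1
  have hmain : ∀ᶠ x : ℝ in atTop, 1 ≤ ψ x ^ 2 := by
    filter_upwards [hA, hB, eventually_gt_atTop α, eventually_ge_atTop (Real.sqrt 2 * α),
      eventually_ge_atTop (1:ℝ)] with x hxA hxB hxα hxs2 hx1
    have hxpos : 0 < x := hα.trans hxα
    have hne1 : x ≠ α := ne_of_gt hxα
    have hne2 : x ≠ -α := by intro h; rw [h] at hxpos; linarith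
    have hD : 0 < x ^ 2 - α ^ 2 := by nlinarith
    have herf : erf 1 ≤ erf (x / (Real.sqrt 2 * α)) := by
      apply erf_one_le
      rw [le_div_iff₀ (by positivity : (0:ℝ) < Real.sqrt 2 * α)]
      simpa using hxs2
    set E : ℝ := Real.exp (x ^ 2 / (4 * α ^ 2)) with hE
    have hEpos : 0 < E := Real.exp_pos _
    -- first term bound
    have hterm1 : x * (x ^ 2 - α ^ 2) * Real.exp (-x ^ 2 / (4 * α ^ 2)) ≤ x ^ 3 := by
      have hle1 : Real.exp (-x ^ 2 / (4 * α ^ 2)) ≤ 1 := by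
        apply Real.exp_le_one_iff.mpr
        have h0 : 0 ≤ x ^ 2 / (4 * α ^ 2) := by positivity
        rw [neg_div]; linarith
      have hxx : 0 ≤ x * (x ^ 2 - α ^ 2) := by positivity
      calc x * (x ^ 2 - α ^ 2) * Real.exp (-x ^ 2 / (4 * α ^ 2))
          ≤ x * (x ^ 2 - α ^ 2) * 1 := mul_le_mul_of_nonneg_left hle1 hxx
        _ ≤ x ^ 3 := by nlinarith
    -- second term bound
    have hterm2 : C * E ≤ Real.sqrt (2 * Real.pi) * α ^ 3 * E * erf (x / (Real.sqrt 2 * α)) := by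
      have h0 : 0 < Real.sqrt (2 * Real.pi) * α ^ 3 * E := by positivity
      calc C * E = Real.sqrt (2 * Real.pi) * α ^ 3 * E * erf 1 := by rw [hC]; ring
        _ ≤ Real.sqrt (2 * Real.pi) * α ^ 3 * E * erf (x / (Real.sqrt 2 * α)) :=
            mul_le_mul_of_nonneg_left herf h0.le
    have hCE : x ^ 3 + x ^ 2 ≤ C * E := by
      calc x ^ 3 + x ^ 2 ≤ C * (x ^ 2 / (4 * α ^ 2)) ^ 2 := hxB
        _ ≤ C * E := mul_le_mul_of_nonneg_left hxA hCpos.le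
    have hψx : ψ x ≤ -1 := by
      rw [hψ x hne1 hne2, div_le_iff₀ hD]
      have : (-1 : ℝ) * (x ^ 2 - α ^ 2) = -(x ^ 2 - α ^ 2) := by ring
      rw [this]
      nlinarith [hterm1, hterm2, hCE]
    nlinarith [hψx]
  -- conclusion
  intro hInt
  obtain ⟨M, hM⟩ := eventually_atTop.mp hmain
  have hrestrict : Integrable (fun x => ψ x ^ 2) (volume.restrict (Set.Ici M)) :=
    hInt.restrict
  have hone : Integrable (fun _ : ℝ => (1:ℝ)) (volume.restrict (Set.Ici M)) := by
    apply hrestrict.mono' aestronglyMeasurable_const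
    rw [ae_restrict_iff' measurableSet_Ici]
    filter_upwards with x hx
    simpa using hM x hx
  rw [integrable_const_iff] at hone
  rcases hone with h | h
  · norm_num at h
  · have h := h.measure_univ_lt_top
    rw [Measure.restrict_apply_univ, Real.volume_Ici] at h
    exact (lt_irrefl _ h)

end
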